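/- Fix ν ∈ ℝ. Let y : I → ℝ be a twice differentiable function on an open interval I ⊆ ℝ with y(t) ≠ 0 and ẏ(t) + ν t ẏ(t) − ν y(t) > 0 for all t ∈ I, satisfying y(t)·ÿ(t)·(1+νt)² = (ẏ(t) + νt·ẏ(t) − ν·y(t))² on I. Then the function F(t) := (t / y(t))·(ẏ(t) + νt·ẏ(t) − ν·y(t)) − log(ẏ(t) + νt·ẏ(t) − ν·y(t)) is constant on I. -/

import Mathlib

/-- Along any solution of y·ÿ·(1+νt)² = (ẏ + νtẏ − νy)² with y ≠ 0 and
ẏ + νtẏ − νy > 0, the function F(t) = (t/y)(ẏ+νtẏ−νy) − log(ẏ+νtẏ−νy)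
is constant. -/
theorem stmt13 (ν : ℝ) (I : Set ℝ) (hI : IsOpen I) (hconv : Convex ℝ I)
    (y y' y'' : ℝ → ℝ)
    (hy : ∀ t ∈ I, HasDerivAt y (y' t) t)
    (hy' : ∀ t ∈ I, HasDerivAt y' (y'' t) t)
    (hne : ∀ t ∈ I, y t ≠ 0)
    (hpos : ∀ t ∈ I, y' t + ν * t * y' t - ν * y t > 0)
    (hode : ∀ t ∈ I, y t * y'' t * (1 + ν * t)^2
        = (y' t + ν * t * y' t - ν * y t)^2) :
    ∀ s ∈ I, ∀ t ∈ I,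
      (s / y s) * (y' s + ν * s * y' s - ν * y s)
          - Real.log (y' s + ν * s * y' s - ν * y s)
      = (t / y t) * (y' t + ν * t * y' t - ν * y t)
          - Real.log (y' t + ν * t * y' t - ν * y t) := by
  set F : ℝ → ℝ := fun t =>
    (t / y t) * (y' t + ν * t * y' t - ν * y t)
      - Real.log (y' t + ν * t * y' t - ν * y t) with hF
  have hFderiv : ∀ t ∈ I, HasDerivAt F 0 t := by
    intro t ht
    have ha := hne t ht
    have hP := hpos t ht
    have hPne : y' t + ν * t * y' t - ν * y t ≠ 0 := ne_of_gt hP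
    have hode' := hode t ht
    have hh : (1 : ℝ) + ν * t ≠ 0 := by
      intro h
      rw [h] at hode'
      nlinarith [hpos t ht]
    -- derivative of P
    have hPd : HasDerivAt (fun t => y' t + ν * t * y' t - ν * y t)
        (y'' t + ν * (y' t + t * y'' t) - ν * y' t) t := by
      have h1 : HasDerivAt (fun t => ν * t * y' t) (ν * (y' t + t * y'' t)) t := by
        have := ((hasDerivAt_id t).const_mul ν |>.mul (hy' t ht) :
          HasDerivAt (fun t => ν * id t * y' t) _ t)
        refine this.congr_deriv ?_
        simp [id]
        ring
      exact ((hy' t ht).add h1).sub ((hy t ht).const_mul ν)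
    -- derivative of t / y t * P
    have h2 : HasDerivAt (fun t => t / y t)
        ((1 * y t - t * y' t) / (y t)^2) t :=
      (hasDerivAt_id t).div (hy t ht) ha
    have h3 : HasDerivAt (fun t => (t / y t) * (y' t + ν * t * y' t - ν * y t))
        ((1 * y t - t * y' t) / (y t)^2 * (y' t + ν * t * y' t - ν * y t)
          + (t / y t) * (y'' t + ν * (y' t + t * y'' t) - ν * y' t)) t :=
      h2.mul hPd
    have h4 : HasDerivAt (fun t => Real.log (y' t + ν * t * y' t - ν * y t))
        ((y'' t + ν * (y' t + t * y'' t) - ν * y' t)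
          / (y' t + ν * t * y' t - ν * y t)) t :=
      hPd.log hPne
    have h5 : HasDerivAt (fun t => t / y t * (y' t + ν * t * y' t - ν * y t)
        - Real.log (y' t + ν * t * y' t - ν * y t)) _ t := h3.sub h4
    convert h5 using 1
    have hPne' : y' t * (1 + t * ν) - y t * ν ≠ 0 := by
      intro h; apply hPne; linear_combination h
    field_simp
    refine mul_left_cancel₀ hh ?_
    linear_combination (y t - t * (y' t + ν * t * y' t - ν * y t)) * hode'
  have hdiff : DifferentiableOn ℝ F I := fun x hx =>
    (hFderiv x hx).differentiableAt.differentiableWithinAt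
  have hfd : ∀ x ∈ I, fderivWithin ℝ F I x = 0 := by
    intro x hx
    have := ((hFderiv x hx).hasFDerivAt.hasFDerivWithinAt).fderivWithin
      (hI.uniqueDiffOn x hx)
    rw [this]
    ext
    simp
  intro s hs t ht
  exact hconv.is_const_of_fderivWithin_eq_zero hdiff hfd hs ht
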